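/- (Andreief's formula) Let (Ω,μ) be a σ-finite measure space and let f_1,…,f_k, g_1,…,g_k ∈ L²(Ω,μ) be real-valued square-integrable functions. Then ∫_{Ω^k} det( f_i(x_l) )_{1≤i,l≤k} · det( g_j(x_l) )_{1≤l,j≤k} dμ(x_1)⋯dμ(x_k) = k! · det( ∫_Ω f_i(x) g_j(x) dμ(x) )_{1≤i,j≤k}. -/

import Mathlib

open MeasureTheory

private lemma andreief_sign_sq {k : ℕ} (σ : Equiv.Perm (Fin k)) :
    ((Equiv.Perm.sign σ : ℤ) : ℝ) * ((Equiv.Perm.sign σ : ℤ) : ℝ) = 1 := by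
  rcases Int.units_eq_one_or (Equiv.Perm.sign σ) with h | h <;> rw [h] <;> norm_num

private lemma andreief_alg {k : ℕ} (A : Matrix (Fin k) (Fin k) ℝ) :
    ∑ p : Equiv.Perm (Fin k) × Equiv.Perm (Fin k),
        ((Equiv.Perm.sign p.1 : ℤ) : ℝ) * ((Equiv.Perm.sign p.2 : ℤ) : ℝ) *
          ∏ l, A (p.1 l) (p.2 l) =
      (Nat.factorial k : ℝ) * A.det := by
  rw [Fintype.sum_prod_type]
  have hσ : ∀ σ : Equiv.Perm (Fin k),
      (∑ τ : Equiv.Perm (Fin k),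
        ((Equiv.Perm.sign σ : ℤ) : ℝ) * ((Equiv.Perm.sign τ : ℤ) : ℝ) *
          ∏ l, A (σ l) (τ l)) = A.det := by
    intro σ
    rw [← Equiv.sum_comp (Equiv.mulRight σ)
      (fun τ => ((Equiv.Perm.sign σ : ℤ) : ℝ) * ((Equiv.Perm.sign τ : ℤ) : ℝ) *
          ∏ l, A (σ l) (τ l))]
    have hterm : ∀ ρ : Equiv.Perm (Fin k),
        ((Equiv.Perm.sign σ : ℤ) : ℝ) * ((Equiv.Perm.sign (Equiv.mulRight σ ρ) : ℤ) : ℝ) *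
          ∏ l, A (σ l) ((Equiv.mulRight σ ρ) l)
        = ((Equiv.Perm.sign ρ : ℤ) : ℝ) * ∏ m, A m (ρ m) := by
      intro ρ
      have h1 : ((Equiv.Perm.sign σ : ℤ) : ℝ) * ((Equiv.Perm.sign (Equiv.mulRight σ ρ) : ℤ) : ℝ)
          = ((Equiv.Perm.sign ρ : ℤ) : ℝ) := by
        simp only [Equiv.coe_mulRight] at *
        rw [Equiv.Perm.sign_mul]
        push_cast
        rw [show ((Equiv.Perm.sign σ : ℤ) : ℝ) * (((Equiv.Perm.sign ρ : ℤ) : ℝ) * ((Equiv.Perm.sign σ : ℤ) : ℝ)) = ((Equiv.Perm.sign ρ : ℤ) : ℝ) * (((Equiv.Perm.sign σ : ℤ) : ℝ) * ((Equiv.Perm.sign σ : ℤ) : ℝ)) by ring, andreief_sign_sq σ, mul_one]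
      have h2 : (∏ l, A (σ l) ((Equiv.mulRight σ ρ) l)) = ∏ m, A m (ρ m) := by
        have := Equiv.prod_comp σ (fun m => A m (ρ m))
        simpa using this
      rw [h1, h2]
    simp_rw [hterm]
    rw [← Matrix.det_transpose A, Matrix.det_apply']
    rfl
  simp_rw [hσ]
  rw [Finset.sum_const, nsmul_eq_mul]
  congr 1
  rw [Finset.card_univ, Fintype.card_perm, Fintype.card_fin]


/-- **Andreief's formula.** For square-integrable functions
`f_1, …, f_k, g_1, …, g_k` on a σ-finite measure space `(Ω, μ)`,
`∫_{Ω^k} det(f_i(x_l)) · det(g_j(x_l)) dμ^{⊗k}(x) = k! · det(∫ f_i g_j dμ)`. -/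
theorem andreief {Ω : Type*} [MeasurableSpace Ω] (μ : Measure Ω) [SigmaFinite μ]
    (k : ℕ) (f g : Fin k → Ω → ℝ)
    (hf : ∀ i, MemLp (f i) 2 μ) (hg : ∀ i, MemLp (g i) 2 μ) :
    (∫ x : Fin k → Ω,
        Matrix.det (Matrix.of fun i l : Fin k => f i (x l)) *
          Matrix.det (Matrix.of fun l j : Fin k => g j (x l))
        ∂(Measure.pi fun _ : Fin k => μ)) =
      (Nat.factorial k : ℝ) *
        Matrix.det (Matrix.of fun i j : Fin k => ∫ x, f i x * g j x ∂μ) := by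
  classical
  letI : MeasureSpace Ω := ⟨μ⟩
  have hInt : ∀ i j, Integrable (fun x => f i x * g j x) μ := by
    intro i j
    have h : MemLp (f i • g j) 1 μ := (hg j).smul (hf i) (hpqr := ⟨by norm_num [ENNReal.inv_two_add_inv_two]⟩)
    have := memLp_one_iff_integrable.mp h
    exact this
  have expand : ∀ x : Fin k → Ω,
      Matrix.det (Matrix.of fun i l : Fin k => f i (x l)) *
        Matrix.det (Matrix.of fun l j : Fin k => g j (x l)) =
      ∑ p : Equiv.Perm (Fin k) × Equiv.Perm (Fin k),
        ((Equiv.Perm.sign p.1 : ℤ) : ℝ) * ((Equiv.Perm.sign p.2 : ℤ) : ℝ) *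
          ∏ l, f (p.1 l) (x l) * g (p.2 l) (x l) := by
    intro x
    rw [show Matrix.det (Matrix.of fun l j : Fin k => g j (x l)) =
        Matrix.det (Matrix.of fun j l : Fin k => g j (x l)) from by
      rw [← Matrix.det_transpose]; rfl]
    rw [Matrix.det_apply', Matrix.det_apply', Finset.sum_mul_sum, Fintype.sum_prod_type]
    refine Finset.sum_congr rfl fun σ _ => Finset.sum_congr rfl fun τ _ => ?_
    simp only [Matrix.of_apply]
    rw [Finset.prod_mul_distrib]
    ring
  simp_rw [expand]
  rw [integral_finset_sum _ (fun p _ =>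
    ((Integrable.fintype_prod (f := fun l y => f (p.1 l) y * g (p.2 l) y)
      (fun l => hInt _ _))).const_mul _)]
  have hterm : ∀ p : Equiv.Perm (Fin k) × Equiv.Perm (Fin k),
      (∫ x : Fin k → Ω,
        ((Equiv.Perm.sign p.1 : ℤ) : ℝ) * ((Equiv.Perm.sign p.2 : ℤ) : ℝ) *
          ∏ l, f (p.1 l) (x l) * g (p.2 l) (x l) ∂(Measure.pi fun _ : Fin k => μ)) =
      ((Equiv.Perm.sign p.1 : ℤ) : ℝ) * ((Equiv.Perm.sign p.2 : ℤ) : ℝ) *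
        ∏ l, ∫ y, f (p.1 l) y * g (p.2 l) y ∂μ := by
    intro p
    rw [integral_const_mul]
    exact congrArg _ (MeasureTheory.integral_fintype_prod_eq_prod (ι := Fin k)
      (fun l y => f (p.1 l) y * g (p.2 l) y))
  simp_rw [hterm]
  exact andreief_alg (Matrix.of fun i j => ∫ x, f i x * g j x ∂μ)
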